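/- arXiv:1903.11028 — 8 statements merged into one kernel-verified Lean document; each statement's English description precedes it below -/
import Mathlib

section
/- Let S be a finitely generated submonoid of ℕ^d. Then the set PF(S) of pseudo-Frobenius elements of S is finite. -/
open scoped BigOperators

/-- The natural cast of an element of `ℕ^d` into `ℚ^d`. -/
def toQ {d : ℕ} (x : Fin d → ℕ) : Fin d → ℚ := fun i => (x i : ℚ)

/-- The natural cast of an element of `ℕ^d` into `ℤ^d`. -/
def natToZ {d : ℕ} (x : Fin d → ℕ) : Fin d → ℤ := fun i => (x i : ℤ)

/-- The cone `pos(S)` of a submonoid `S ⊆ ℕ^d`: all nonnegative rational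
combinations of elements of `S`, as a subset of `ℚ^d`. -/
def posCone {d : ℕ} (S : AddSubmonoid (Fin d → ℕ)) : Set (Fin d → ℚ) :=
  {q | ∃ (k : ℕ) (c : Fin k → ℚ) (s : Fin k → (Fin d → ℕ)),
    (∀ i, 0 ≤ c i) ∧ (∀ i, s i ∈ S) ∧ q = ∑ i, c i • toQ (s i)}

/-- The gap set `H(S) = (pos(S) \ S) ∩ ℕ^d`. -/
def gaps {d : ℕ} (S : AddSubmonoid (Fin d → ℕ)) : Set (Fin d → ℕ) :=
  {x | toQ x ∈ posCone S ∧ x ∉ S}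

/-- The set of pseudo-Frobenius elements of `S`. -/
def PF {d : ℕ} (S : AddSubmonoid (Fin d → ℕ)) : Set (Fin d → ℕ) :=
  {a | a ∈ gaps S ∧ ∀ s ∈ S, s ≠ 0 → a + s ∈ S}

/-- A term order on `ℕ^d`: a total order compatible with addition for which
`0` is the least element. -/
def IsTermOrder {d : ℕ} (r : (Fin d → ℕ) → (Fin d → ℕ) → Prop) : Prop :=
  (∀ a b, r a b ∨ r b a) ∧ (∀ a b, r a b → r b a → a = b) ∧
    (∀ a b c, r a b → r b c → r a c) ∧ (∀ a, r 0 a) ∧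
    (∀ a b c, r a b → r (a + c) (b + c))

/-- The set of Frobenius elements of `S`: maxima of `H(S)` for some term order. -/
def FrobSet {d : ℕ} (S : AddSubmonoid (Fin d → ℕ)) : Set (Fin d → ℕ) :=
  {f | f ∈ gaps S ∧ ∃ r, IsTermOrder r ∧ ∀ h ∈ gaps S, r h f}

/-- The Apéry set of `S` relative to `b`:
`Ap(S,b) = {a ∈ S : a - b ∈ pos(S) \ S}`, the difference taken in `ℚ^d`. -/
def Apery {d : ℕ} (S : AddSubmonoid (Fin d → ℕ)) (b : Fin d → ℕ) : Set (Fin d → ℕ) :=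
  {a | a ∈ S ∧ (toQ a - toQ b) ∈ posCone S ∧ ¬ ∃ s ∈ S, toQ s = toQ a - toQ b}

/-- The partial order `≼_S`: `x ≼_S y` iff `y - x ∈ S`. -/
def leS {d : ℕ} (S : AddSubmonoid (Fin d → ℕ)) (x y : Fin d → ℕ) : Prop :=
  ∃ s ∈ S, x + s = y

/-- `a` is a `≼_S`-maximal element of `X`. -/
def MaximalIn {d : ℕ} (S : AddSubmonoid (Fin d → ℕ)) (X : Set (Fin d → ℕ))
    (a : Fin d → ℕ) : Prop :=
  a ∈ X ∧ ∀ a' ∈ X, a' ≠ a → ¬ leS S a a'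

/-- `S` is irreducible: it is not the intersection of two submonoids of `ℕ^d`
each properly containing it. -/
def IrreducibleMonoid {d : ℕ} (S : AddSubmonoid (Fin d → ℕ)) : Prop :=
  ¬ ∃ S₁ S₂ : AddSubmonoid (Fin d → ℕ), S < S₁ ∧ S < S₂ ∧
    (S : Set (Fin d → ℕ)) = (S₁ : Set (Fin d → ℕ)) ∩ (S₂ : Set (Fin d → ℕ))

/-- The multiplicity of `S`: componentwise infimum of `S \ {0}`. -/
noncomputable def mult {d : ℕ} (S : AddSubmonoid (Fin d → ℕ)) : Fin d → ℕ :=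
  fun i => sInf {n | ∃ s ∈ S, s ≠ 0 ∧ s i = n}

/-- `S` is a PI-monoid: `S = (a + T) ∪ {0}` for some submonoid `T` of `ℕ^d`
and some `a ∈ T \ {0}`. -/
def IsPIMonoid {d : ℕ} (S : AddSubmonoid (Fin d → ℕ)) : Prop :=
  ∃ (T : AddSubmonoid (Fin d → ℕ)) (a : Fin d → ℕ), a ∈ T ∧ a ≠ 0 ∧
    (S : Set (Fin d → ℕ)) = {x | ∃ t ∈ T, x = a + t} ∪ {0}

/-- `G` is a minimal system of generators of `S`. -/
def IsMinimalGenSet {d : ℕ} (S : AddSubmonoid (Fin d → ℕ)) (G : Set (Fin d → ℕ)) : Prop :=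
  AddSubmonoid.closure G = S ∧ ∀ G' ⊂ G, AddSubmonoid.closure G' ≠ S

/-- The pseudo-Frobenius set of a finitely generated submonoid
of `ℕ^d` is finite. -/
theorem pf_finite {d : ℕ} (hd : 1 ≤ d) (S : AddSubmonoid (Fin d → ℕ))
    (hfg : S.FG) : (PF S).Finite := by
  obtain ⟨T, hT⟩ := hfg
  by_cases hS : ∃ g ∈ S, g ≠ 0
  · obtain ⟨g, hgS, hg0⟩ := hS
    have hrep : ∀ a : PF S, ∃ c : (Fin d → ℕ) → ℕ,
        ∑ t ∈ T, c t • t = (a : Fin d → ℕ) + g := by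
      rintro ⟨a, ha⟩
      have h1 : a + g ∈ S := ha.2 g hgS hg0
      have h2 : a + g ∈ Submodule.span ℕ (↑T : Set (Fin d → ℕ)) := by
        rw [← Submodule.mem_toAddSubmonoid, Submodule.span_nat_eq_addSubmonoidClosure, hT]
        exact h1
      obtain ⟨f, -, hf⟩ := Submodule.mem_span_finset.1 h2
      exact ⟨f, hf⟩
    choose c hc using hrep
    have key : ∀ a b : PF S, (∀ t ∈ T, c a t ≤ c b t) → a = b := by
      intro a b hle
      set s : Fin d → ℕ := ∑ t ∈ T, (c b t - c a t) • t with hs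
      have hsS : s ∈ S := by
        rw [← hT]
        exact AddSubmonoid.sum_mem _ fun t ht =>
          nsmul_mem (AddSubmonoid.subset_closure ht) _
      have hsum : ((a : Fin d → ℕ) + g) + s = (b : Fin d → ℕ) + g := by
        rw [← hc a, ← hc b, hs, ← Finset.sum_add_distrib]
        refine Finset.sum_congr rfl fun t ht => ?_
        rw [← add_smul, Nat.add_sub_cancel' (hle t ht)]
      have hab : (a : Fin d → ℕ) + s = b := by
        have : ((a : Fin d → ℕ) + s) + g = (b : Fin d → ℕ) + g := by
          rw [← hsum]; ring
        exact add_right_cancel this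
      by_cases hs0 : s = 0
      · exact Subtype.ext (by rw [← hab, hs0, add_zero])
      · exfalso
        have hbS : (b : Fin d → ℕ) ∈ S := by
          rw [← hab]; exact a.2.2 s hsS hs0
        exact b.2.1.2 hbS
    by_contra hinf
    set e := Set.Infinite.natEmbedding _ hinf with he
    haveI : IsWellOrder ℕ (· < ·) := inferInstance
    obtain ⟨m, n, hmn, hle⟩ := (Set.isPWO_univ_iff.2 inferInstance : (Set.univ : Set (↥T → ℕ)).IsPWO).exists_lt
      (f := fun k (t : ↥T) => c (e k) (t : Fin d → ℕ)) (fun _ => Set.mem_univ _)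
    have : e m = e n := key (e m) (e n) fun t ht => hle ⟨t, ht⟩
    exact hmn.ne (e.injective this)
  · have hPF : PF S = ∅ := by
      ext a
      simp only [Set.mem_empty_iff_false, iff_false]
      intro ha
      obtain ⟨k, cc, ss, hcc, hss, heq⟩ := ha.1.1
      have hz : toQ a = 0 := by
        rw [heq]
        refine Finset.sum_eq_zero fun i _ => ?_
        have h0 : ss i = 0 := by
          by_contra hne; exact hS ⟨ss i, hss i, hne⟩
        rw [h0]
        funext j
        simp [toQ]
      have ha0 : a = 0 := by
        funext i
        have := congrFun hz i
        simpa [toQ] using this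
      exact ha.1.2 (ha0 ▸ S.zero_mem)
    rw [hPF]
    exact Set.finite_empty
end

section
/- Let n ≥ 1, let a₁, …, a_n ∈ ℕ^d, let S be the submonoid of ℕ^d generated by a₁, …, a_n, let G(S) be the subgroup of ℤ^d generated by a₁, …, a_n, and let f ∈ F(S) be a Frobenius element of S. Then f ∈ G(S) \ S, and for every b ∈ G(S) that can be written as b = Σ_{i=1}^n λ_i a_i with all λ_i strictly positive rational numbers (i.e., every b ∈ G(S) lying in the relative interior of the cone pos(S)), one has f + b ∈ S \ {0}. In other words, every Frobenius element of S is a Frobenius vector of S. -/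
open scoped BigOperators

lemma toQ_add {d : ℕ} (x y : Fin d → ℕ) : toQ (x + y) = toQ x + toQ y := by
  funext i; simp [toQ]

lemma toQ_eq_zero {d : ℕ} {x : Fin d → ℕ} (h : toQ x = 0) : x = 0 := by
  funext i
  have := congrFun h i
  simpa [toQ] using this

lemma mem_posCone_of_mem {d : ℕ} {S : AddSubmonoid (Fin d → ℕ)} {x : Fin d → ℕ}
    (hx : x ∈ S) : toQ x ∈ posCone S := by
  refine ⟨1, fun _ => 1, fun _ => x, fun _ => zero_le_one, fun _ => hx, ?_⟩
  simp

lemma posCone_add {d : ℕ} {S : AddSubmonoid (Fin d → ℕ)} {p q : Fin d → ℚ}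
    (hp : p ∈ posCone S) (hq : q ∈ posCone S) : p + q ∈ posCone S := by
  obtain ⟨k1, c1, s1, hc1, hs1, rfl⟩ := hp
  obtain ⟨k2, c2, s2, hc2, hs2, rfl⟩ := hq
  refine ⟨k1 + k2, Fin.append c1 c2, Fin.append s1 s2, ?_, ?_, ?_⟩
  · intro i
    refine Fin.addCases (fun j => ?_) (fun j => ?_) i
    · simpa [Fin.append_left] using hc1 j
    · simpa [Fin.append_right] using hc2 j
  · intro i
    refine Fin.addCases (fun j => ?_) (fun j => ?_) i
    · simpa [Fin.append_left] using hs1 j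
    · simpa [Fin.append_right] using hs2 j
  · rw [Fin.sum_univ_add]
    simp [Fin.append_left, Fin.append_right]

lemma frob_add_mem {d : ℕ} {S : AddSubmonoid (Fin d → ℕ)} {f : Fin d → ℕ}
    (hf : f ∈ FrobSet S) {x : Fin d → ℕ} (hx : toQ x ∈ posCone S) (hx0 : x ≠ 0) :
    f + x ∈ S := by
  obtain ⟨⟨hfpos, hfS⟩, r, ⟨_htot, hanti, _htrans, hzero, hadd⟩, hmax⟩ := hf
  by_contra h
  have hg : f + x ∈ gaps S := ⟨by rw [toQ_add]; exact posCone_add hfpos hx, h⟩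
  have h1 : r (f + x) f := hmax _ hg
  have h2 : r f (f + x) := by
    have := hadd 0 x f (hzero x)
    rwa [zero_add, add_comm x f] at this
  have heq : f + x = f := hanti _ _ h1 h2
  apply hx0
  have : f + x = f + 0 := by rw [add_zero]; exact heq
  exact add_left_cancel this

lemma natToZ_add {d : ℕ} (x y : Fin d → ℕ) : natToZ (x + y) = natToZ x + natToZ y := by
  funext i; simp [natToZ]

lemma natToZ_mem_closure {d n : ℕ} (a : Fin n → (Fin d → ℕ)) {x : Fin d → ℕ}
    (hx : x ∈ AddSubmonoid.closure (Set.range a)) :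
    natToZ x ∈ AddSubgroup.closure (Set.range fun i => natToZ (a i)) := by
  induction hx using AddSubmonoid.closure_induction with
  | mem y hy =>
    obtain ⟨i, rfl⟩ := hy
    exact AddSubgroup.subset_closure ⟨i, rfl⟩
  | zero =>
    have : natToZ (0 : Fin d → ℕ) = 0 := by funext i; simp [natToZ]
    rw [this]; exact zero_mem _
  | add y z _ _ hy hz =>
    rw [natToZ_add]; exact add_mem hy hz

/-- Every Frobenius element `f` of `S = ⟨a₁,…,aₙ⟩` is a Frobenius
vector: `f ∈ G(S) \ S` and `f + b ∈ S \ {0}` for every `b ∈ G(S)` lying in the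
relative interior of `pos(S)`. -/
theorem frobenius_is_frobenius_vector {d n : ℕ} (hd : 1 ≤ d) (hn : 1 ≤ n)
    (a : Fin n → (Fin d → ℕ)) (S : AddSubmonoid (Fin d → ℕ))
    (hS : S = AddSubmonoid.closure (Set.range a))
    (G : AddSubgroup (Fin d → ℤ))
    (hG : G = AddSubgroup.closure (Set.range fun i => natToZ (a i)))
    (f : Fin d → ℕ) (hf : f ∈ FrobSet S) :
    (natToZ f ∈ G ∧ f ∉ S) ∧
      ∀ b : Fin d → ℤ, b ∈ G →
        (∃ c : Fin n → ℚ, (∀ i, 0 < c i) ∧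
          (fun i => (b i : ℚ)) = ∑ i, c i • toQ (a i)) →
        ∃ s ∈ S, s ≠ 0 ∧ natToZ s = natToZ f + b := by
  have hfpos := hf.1.1
  have hfS := hf.1.2
  have hf0 : f ≠ 0 := fun h => hfS (h ▸ zero_mem S)
  -- a nonzero element of S
  obtain ⟨k, c, sv, hc, hsv, hsum⟩ := hfpos
  have hex : ∃ i, sv i ≠ 0 := by
    by_contra h
    push_neg at h
    apply hf0
    apply toQ_eq_zero
    rw [hsum]
    apply Finset.sum_eq_zero
    intro i _
    rw [h i]
    have hz : toQ (0 : Fin d → ℕ) = 0 := by funext j; simp [toQ]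
    rw [hz, smul_zero]
  obtain ⟨i0, hi0⟩ := hex
  have hs0S : sv i0 ∈ S := hsv i0
  have key : ∀ x : Fin d → ℕ, toQ x ∈ posCone S → x ≠ 0 → f + x ∈ S :=
    fun x hx hx0 => frob_add_mem hf hx hx0
  constructor
  · constructor
    · -- natToZ f ∈ G
      have h1 : f + sv i0 ∈ S := key _ (mem_posCone_of_mem hs0S) hi0
      have h2 : natToZ (f + sv i0) ∈ G := by
        rw [hG]; exact natToZ_mem_closure a (hS ▸ h1)
      have h3 : natToZ (sv i0) ∈ G := by
        rw [hG]; exact natToZ_mem_closure a (hS ▸ hs0S)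
      have h4 : natToZ f = natToZ (f + sv i0) - natToZ (sv i0) := by
        rw [natToZ_add]; ring
      rw [h4]
      exact sub_mem h2 h3
    · exact hfS
  · rintro b hb ⟨cb, hcb, hbeq⟩
    have hbi : ∀ i, (0:ℚ) ≤ (b i : ℚ) := by
      intro i
      have := congrFun hbeq i
      rw [this, Finset.sum_apply]
      apply Finset.sum_nonneg
      intro j _
      have : (0:ℚ) ≤ cb j * (a j i : ℚ) := mul_nonneg (hcb j).le (by positivity)
      simpa [toQ] using this
    have hbnn : ∀ i, (0:ℤ) ≤ b i := fun i => by exact_mod_cast hbi i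
    set b' : Fin d → ℕ := fun i => (b i).toNat with hb'
    have hb'z : natToZ b' = b := by
      funext i; simp [natToZ, hb', Int.toNat_of_nonneg (hbnn i)]
    have hb'Q : toQ b' = ∑ i, cb i • toQ (a i) := by
      funext i
      have h1 : (b' i : ℚ) = (b i : ℚ) := by
        exact_mod_cast congrArg (fun z : ℤ => (z:ℚ)) (Int.toNat_of_nonneg (hbnn i))
      rw [show toQ b' i = (b' i : ℚ) from rfl, h1, congrFun hbeq i]
    have haS : ∀ j, a j ∈ S := fun j => hS ▸ AddSubmonoid.subset_closure ⟨j, rfl⟩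
    have hb'pos : toQ b' ∈ posCone S := ⟨n, cb, a, fun j => (hcb j).le, haS, hb'Q⟩
    have hb'0 : b' ≠ 0 := by
      intro h0
      -- then all a j = 0, so S = {0}, contradicting sv i0 ≠ 0
      have hall : ∀ j, a j = 0 := by
        intro j
        funext i
        have hz : (0:ℚ) = ∑ l, cb l * (a l i : ℚ) := by
          have := congrFun hb'Q i
          rw [h0] at this
          simpa [toQ, Finset.sum_apply] using this
        have := (Finset.sum_eq_zero_iff_of_nonneg
            (fun l _ => mul_nonneg (hcb l).le (by positivity))).1 hz.symm
          j (Finset.mem_univ j)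
        have : (a j i : ℚ) = 0 := by
          rcases mul_eq_zero.1 this with h | h
          · exact absurd h (ne_of_gt (hcb j))
          · exact h
        exact_mod_cast this
      have hallS : ∀ x ∈ AddSubmonoid.closure (Set.range a), x = (0 : Fin d → ℕ) := by
        intro x hx
        induction hx using AddSubmonoid.closure_induction with
        | mem y hy => obtain ⟨j, rfl⟩ := hy; exact hall j
        | zero => rfl
        | add y z _ _ hy hz => rw [hy, hz]; simp
      exact hi0 (hallS _ (hS ▸ hs0S))
    refine ⟨f + b', key _ hb'pos hb'0, ?_, ?_⟩
    · intro h0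
      apply hb'0
      funext i
      have h1 := congrFun h0 i
      simp only [Pi.add_apply, Pi.zero_apply] at h1
      show b' i = 0
      omega
    · rw [natToZ_add, hb'z]
end

section
/- (Selmer-type formula) Let S be a submonoid of ℕ^d, let ≼ be a term order on ℕ^d, and let f ∈ H(S) satisfy h ≼ f for every h ∈ H(S) (so f is a Frobenius element of S realized by ≼). Then for every b ∈ S \ {0}: f + b ∈ Ap(S, b), and a ≼ f + b for every a ∈ Ap(S, b). That is, f + b is the ≼-maximum of Ap(S, b), so f = max_≼ Ap(S, b) − b. -/
open scoped BigOperators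

lemma toQ_inj {d : ℕ} {x y : Fin d → ℕ} (h : toQ x = toQ y) : x = y := by
  funext i
  have := congrFun h i
  simpa [toQ] using this

lemma posCone_nonneg {d : ℕ} {S : AddSubmonoid (Fin d → ℕ)} {q : Fin d → ℚ}
    (hq : q ∈ posCone S) (i : Fin d) : 0 ≤ q i := by
  obtain ⟨k, c, s, hc, hs, rfl⟩ := hq
  have : (∑ j, c j • toQ (s j)) i = ∑ j, c j * (s j i : ℚ) := by
    simp [toQ, Finset.sum_apply]
  rw [this]
  exact Finset.sum_nonneg fun j _ => mul_nonneg (hc j) (by positivity)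

lemma posCone_add_mem {d : ℕ} {S : AddSubmonoid (Fin d → ℕ)} {q : Fin d → ℚ}
    {b : Fin d → ℕ} (hq : q ∈ posCone S) (hb : b ∈ S) : q + toQ b ∈ posCone S := by
  obtain ⟨k, c, s, hc, hs, rfl⟩ := hq
  refine ⟨k + 1, Fin.snoc c 1, Fin.snoc s b, ?_, ?_, ?_⟩
  · intro i
    induction i using Fin.lastCases with
    | last => simp
    | cast i => simpa using hc i
  · intro i
    induction i using Fin.lastCases with
    | last => simpa using hb
    | cast i => simpa using hs i
  · rw [Fin.sum_univ_castSucc]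
    simp

/-- Selmer-type formula: If `f` is the maximum of `H(S)` for a
term order `≼`, then for every `b ∈ S \ {0}`, `f + b` is the `≼`-maximum of
the Apéry set `Ap(S, b)`. -/
theorem selmer_formula {d : ℕ} (S : AddSubmonoid (Fin d → ℕ))
    (r : (Fin d → ℕ) → (Fin d → ℕ) → Prop) (hr : IsTermOrder r)
    (f : Fin d → ℕ) (hfH : f ∈ gaps S) (hfmax : ∀ h ∈ gaps S, r h f)
    (b : Fin d → ℕ) (hb : b ∈ S) (hb0 : b ≠ 0) :
    f + b ∈ Apery S b ∧ ∀ x ∈ Apery S b, r x (f + b) := by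
  obtain ⟨htot, hanti, htrans, hzero, hadd⟩ := hr
  obtain ⟨hfpos, hfS⟩ := hfH
  have hfbpos : toQ (f + b) ∈ posCone S := by
    have := posCone_add_mem hfpos hb
    convert this using 1
    funext i; simp [toQ]
  have hfbS : f + b ∈ S := by
    by_contra hns
    have hgap : f + b ∈ gaps S := ⟨hfbpos, hns⟩
    have h1 : r (f + b) f := hfmax _ hgap
    have h2 : r f (f + b) := by
      have := hadd 0 b f (hzero b)
      simpa [add_comm] using this
    have := hanti _ _ h2 h1
    exact hb0 (by
      funext i
      have := congrFun this i
      simpa using this)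
  constructor
  · refine ⟨hfbS, ?_, ?_⟩
    · have : toQ (f + b) - toQ b = toQ f := by
        funext i; simp [toQ]
      rw [this]; exact hfpos
    · rintro ⟨s, hsS, hs⟩
      have : toQ s = toQ f := by
        rw [hs]; funext i; simp [toQ]
      exact hfS (toQ_inj this ▸ hsS)
  · rintro x ⟨hxS, hxpos, hxn⟩
    have hge : ∀ i, b i ≤ x i := by
      intro i
      have h0 := posCone_nonneg hxpos i
      have : (0 : ℚ) ≤ (x i : ℚ) - (b i : ℚ) := by simpa [toQ] using h0
      exact_mod_cast sub_nonneg.mp this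
    set h : Fin d → ℕ := fun i => x i - b i with hh
    have hxb : h + b = x := by
      funext i; simp [hh, Nat.sub_add_cancel (hge i)]
    have hhQ : toQ h = toQ x - toQ b := by
      funext i
      simp only [toQ, hh, Pi.sub_apply]
      have := hge i
      push_cast [Nat.cast_sub this]
      ring
    have hhgap : h ∈ gaps S := by
      refine ⟨hhQ ▸ hxpos, fun hcon => ?_⟩
      exact hxn ⟨h, hcon, hhQ⟩
    have := hadd h f b (hfmax h hhgap)
    rwa [hxb] at this
end

section
/- Let S be a finitely generated submonoid of ℕ^d and let a ∈ F(S) be a Frobenius element of S with 2a ∈ S. If PF(S) ≠ {a}, then S ∪ {a} is a submonoid of ℕ^d and PF(S ∪ {a}) ≠ ∅. -/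
open scoped BigOperators

lemma posCone_mono {d : ℕ} {S T : AddSubmonoid (Fin d → ℕ)} (h : S ≤ T) :
    posCone S ⊆ posCone T := by
  rintro q ⟨k, c, s, hc, hs, rfl⟩
  exact ⟨k, c, s, hc, fun i => h (hs i), rfl⟩

/-- If `a` is a Frobenius element of a finitely generated `S`
with `2a ∈ S` and `PF(S) ≠ {a}`, then `S ∪ {a}` is a submonoid with nonempty
pseudo-Frobenius set (i.e. an MPD-semigroup). -/
theorem union_frobenius_mpd {d : ℕ} (S : AddSubmonoid (Fin d → ℕ)) (hfg : S.FG)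
    (a : Fin d → ℕ) (ha : a ∈ FrobSet S) (h2a : a + a ∈ S)
    (hpf : PF S ≠ {a}) :
    ∃ S' : AddSubmonoid (Fin d → ℕ),
      (S' : Set (Fin d → ℕ)) = (S : Set (Fin d → ℕ)) ∪ {a} ∧
        (PF S').Nonempty := by
  obtain ⟨⟨haPos, haS⟩, r, ⟨htot, hanti, htrans, hzero, hadd⟩, hmax⟩ := ha
  have ha0 : a ≠ 0 := fun h => haS (h ▸ S.zero_mem)
  have key : ∀ s ∈ S, s ≠ 0 → a + s ∈ S := by
    intro s hs hs0
    by_contra hns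
    have hgap : a + s ∈ gaps S := by
      refine ⟨?_, hns⟩
      rw [toQ_add]
      exact posCone_add haPos ⟨1, fun _ => 1, fun _ => s, fun _ => zero_le_one,
        fun _ => hs, by simp⟩
    have h1 := hmax _ hgap
    have h2 : r a (a + s) := by
      have := hadd 0 s a (hzero s)
      simpa [add_comm] using this
    have : a + s = a := hanti _ _ h1 h2
    exact hs0 (add_left_cancel (show a + s = a + 0 by simpa using this))
  have haPF : a ∈ PF S := ⟨⟨haPos, haS⟩, key⟩
  -- get b ∈ PF S, b ≠ a
  have hnsub : ¬ PF S ⊆ {a} := by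
    intro h
    exact hpf (Set.Subset.antisymm h (by simpa using haPF))
  obtain ⟨b, hbPF, hba⟩ := Set.not_subset.mp hnsub
  have hba' : b ≠ a := by simpa using hba
  obtain ⟨⟨hbPos, hbS⟩, hbkey⟩ := hbPF
  have hb0 : b ≠ 0 := fun h => hbS (h ▸ S.zero_mem)
  -- b + a ∈ S
  have hbaS : b + a ∈ S := by
    by_contra hns
    have hgap : b + a ∈ gaps S := ⟨by rw [toQ_add]; exact posCone_add hbPos haPos, hns⟩
    have h1 := hmax _ hgap
    have h2 : r a (b + a) := by simpa using hadd 0 b a (hzero b)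
    have : b + a = a := hanti _ _ h1 h2
    exact hb0 (by
      have : b + a = 0 + a := by simpa using this
      exact add_right_cancel this)
  -- construct S'
  refine ⟨{ carrier := (S : Set (Fin d → ℕ)) ∪ {a}
            zero_mem' := Or.inl S.zero_mem
            add_mem' := ?_ }, rfl, ?_⟩
  · rintro x y (hx | rfl) (hy | rfl)
    · exact Or.inl (S.add_mem hx hy)
    · by_cases hx0 : x = 0
      · subst hx0; right; simp
      · exact Or.inl (by rw [add_comm]; exact key x hx hx0)
    · by_cases hy0 : y = 0
      · subst hy0; right; simp
      · exact Or.inl (key y hy hy0)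
    · exact Or.inl h2a
  · refine ⟨b, ⟨?_, ?_⟩, ?_⟩
    · refine posCone_mono ?_ hbPos
      intro x hx
      exact Or.inl hx
    · rintro (h | h)
      · exact hbS h
      · exact hba' h
    · rintro s (hs | hs) hs0
      · exact Or.inl (hbkey s hs hs0)
      · rw [Set.mem_singleton_iff] at hs
        subst hs
        exact Or.inl hbaS
end

section
/- Let S be a submonoid of ℕ^d with H(S) finite and let a ∈ PF(S) be a pseudo-Frobenius element of S with 2a ∈ S. Then S ∪ {a} is a submonoid of ℕ^d with pos(S ∪ {a}) = pos(S) and H(S ∪ {a}) ⊆ H(S); in particular H(S ∪ {a}) is finite, so if S is a C-semigroup then S ∪ {a} is again a C-semigroup. -/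
open scoped BigOperators

/-- If `H(S)` is finite, `a ∈ PF(S)` and `2a ∈ S`, then
`S ∪ {a}` is a submonoid with the same cone, `H(S ∪ {a}) ⊆ H(S)`, and in
particular `H(S ∪ {a})` is finite. -/
theorem union_pf_csemigroup {d : ℕ} (S : AddSubmonoid (Fin d → ℕ))
    (hfin : (gaps S).Finite) (a : Fin d → ℕ) (ha : a ∈ PF S)
    (h2a : a + a ∈ S) :
    ∃ S' : AddSubmonoid (Fin d → ℕ),
      (S' : Set (Fin d → ℕ)) = (S : Set (Fin d → ℕ)) ∪ {a} ∧
        posCone S' = posCone S ∧ gaps S' ⊆ gaps S ∧ (gaps S').Finite := by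
  classical
  obtain ⟨⟨hposa, hanS⟩, hpf⟩ := ha
  have hzne : (a : Fin d → ℕ) ≠ 0 := by
    rintro rfl; exact hanS S.zero_mem
  refine ⟨{ carrier := (S : Set (Fin d → ℕ)) ∪ {a},
            zero_mem' := Or.inl S.zero_mem,
            add_mem' := ?_ }, rfl, ?_, ?_, ?_⟩
  · rintro x y (hx | hx) (hy | hy)
    · exact Or.inl (S.add_mem hx hy)
    · simp only [Set.mem_singleton_iff] at hy; subst hy
      by_cases hx0 : x = 0
      · subst hx0; exact Or.inr (by simp)
      · exact Or.inl (by rw [add_comm]; exact hpf x hx hx0)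
    · simp only [Set.mem_singleton_iff] at hx; subst hx
      by_cases hy0 : y = 0
      · subst hy0; exact Or.inr (by simp)
      · exact Or.inl (hpf y hy hy0)
    · simp only [Set.mem_singleton_iff] at hx hy; subst hx; subst hy
      exact Or.inl h2a
  · -- posCone equality
    apply Set.Subset.antisymm
    · rintro q ⟨k, c, s, hc, hs, rfl⟩
      refine ⟨k, fun i => if s i ∈ S then c i else c i / 2,
        fun i => if s i ∈ S then s i else a + a, ?_, ?_, ?_⟩
      · intro i; by_cases h : s i ∈ S <;> simp only [h, if_true, if_false] <;> [exact hc i; linarith [hc i]]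
      · intro i; by_cases h : s i ∈ S <;> simp [h, h2a]
      · apply Finset.sum_congr rfl
        intro i _
        by_cases h : s i ∈ S
        · simp [h]
        · have : s i = a := by
            rcases hs i with h' | h'
            · exact absurd h' h
            · exact h'
          simp only [this, if_neg hanS, toQ_add, smul_add]
          funext j
          simp only [Pi.smul_apply, Pi.add_apply, smul_eq_mul]
          ring
    · rintro q ⟨k, c, s, hc, hs, rfl⟩
      exact ⟨k, c, s, hc, fun i => Or.inl (hs i), rfl⟩
  · rintro x ⟨hx1, hx2⟩
    refine ⟨?_, fun hxS => hx2 (Or.inl hxS)⟩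
    obtain ⟨k, c, s, hc, hs, hq⟩ := hx1
    refine ⟨k, fun i => if s i ∈ S then c i else c i / 2,
      fun i => if s i ∈ S then s i else a + a, ?_, ?_, ?_⟩
    · intro i; by_cases h : s i ∈ S <;> simp only [h, if_true, if_false] <;> [exact hc i; linarith [hc i]]
    · intro i; by_cases h : s i ∈ S <;> simp [h, h2a]
    · rw [hq]
      apply Finset.sum_congr rfl
      intro i _
      by_cases h : s i ∈ S
      · simp [h]
      · have : s i = a := by
          rcases hs i with h' | h'
          · exact absurd h' h
          · exact h'
        simp only [this, if_neg hanS, toQ_add, smul_add]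
        funext j
        simp only [Pi.smul_apply, Pi.add_apply, smul_eq_mul]
        ring
  · exact hfin.subset fun x hx => ⟨by
      obtain ⟨hx1, hx2⟩ := hx
      obtain ⟨k, c, s, hc, hs, hq⟩ := hx1
      refine ⟨k, fun i => if s i ∈ S then c i else c i / 2,
        fun i => if s i ∈ S then s i else a + a, ?_, ?_, ?_⟩
      · intro i; by_cases h : s i ∈ S <;> simp only [h, if_true, if_false] <;> [exact hc i; linarith [hc i]]
      · intro i; by_cases h : s i ∈ S <;> simp [h, h2a]
      · rw [hq]
        apply Finset.sum_congr rfl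
        intro i _
        by_cases h : s i ∈ S
        · simp [h]
        · have hsa : s i = a := by
            rcases hs i with h' | h'
            · exact absurd h' h
            · exact h'
          simp only [hsa, if_neg hanS, toQ_add, smul_add]
          funext j
          simp only [Pi.smul_apply, Pi.add_apply, smul_eq_mul]
          ring, fun hxS => hx.2 (Or.inl hxS)⟩
end

section
/- Let S be a finitely generated submonoid of ℕ^d that is irreducible and has a Frobenius element f ∈ F(S). Then S is maximal among all submonoids of ℕ^d having f as a Frobenius element: for every submonoid S' of ℕ^d with S ⊆ S' and f ∈ F(S'), one has S' = S. -/
open scoped BigOperators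

lemma posCone_combo {d : ℕ} (S : AddSubmonoid (Fin d → ℕ)) {f s : Fin d → ℕ} (k : ℕ)
    (hf : toQ f ∈ posCone S) (hs : s ∈ S) : toQ (k • f + s) ∈ posCone S := by
  obtain ⟨m, c, t, hc, ht, heq⟩ := hf
  refine ⟨m + 1, Fin.cons 1 (fun i => (k : ℚ) * c i), Fin.cons s t, ?_, ?_, ?_⟩
  · intro i
    refine Fin.cases ?_ ?_ i
    · norm_num
    · intro j
      simp only [Fin.cons_succ]
      exact mul_nonneg (by positivity) (hc j)
  · intro i
    refine Fin.cases ?_ ?_ i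
    · simpa using hs
    · intro j; simpa using ht j
  · funext j
    have h1 := congrFun heq j
    simp only [toQ, Finset.sum_apply, Pi.smul_apply, smul_eq_mul] at h1
    rw [Fin.sum_univ_succ]
    simp only [Fin.cons_zero, Fin.cons_succ, toQ, Pi.add_apply, Pi.smul_apply,
      Finset.sum_apply, smul_eq_mul]
    push_cast
    rw [h1, Finset.mul_sum]
    ring_nf

lemma mem_closure_insert_frob {d : ℕ} (S : AddSubmonoid (Fin d → ℕ)) (f x : Fin d → ℕ)
    (hx : x ∈ AddSubmonoid.closure (insert f (S : Set (Fin d → ℕ)))) :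
    ∃ k : ℕ, ∃ s ∈ S, x = k • f + s := by
  induction hx using AddSubmonoid.closure_induction with
  | mem y hy =>
    rcases hy with rfl | hy
    · exact ⟨1, 0, S.zero_mem, by simp⟩
    · exact ⟨0, y, hy, by simp⟩
  | zero => exact ⟨0, 0, S.zero_mem, by simp⟩
  | add a b _ _ ha hb =>
    obtain ⟨k₁, s₁, hs₁, rfl⟩ := ha
    obtain ⟨k₂, s₂, hs₂, rfl⟩ := hb
    exact ⟨k₁ + k₂, s₁ + s₂, S.add_mem hs₁ hs₂, by rw [add_nsmul]; abel⟩

/-- A finitely generated irreducible submonoid `S` of `ℕ^d` with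
a Frobenius element `f` is maximal among submonoids of `ℕ^d` having `f` as a
Frobenius element. -/
theorem irreducible_maximal {d : ℕ} (S : AddSubmonoid (Fin d → ℕ)) (hfg : S.FG)
    (hirr : IrreducibleMonoid S) (f : Fin d → ℕ) (hf : f ∈ FrobSet S)
    (S' : AddSubmonoid (Fin d → ℕ)) (hSS' : S ≤ S') (hf' : f ∈ FrobSet S') :
    S' = S := by
  by_contra hne
  have hlt : S < S' := lt_of_le_of_ne hSS' (Ne.symm hne)
  obtain ⟨⟨hfpos, hfS⟩, r, hr, hmax⟩ := hf
  obtain ⟨⟨_, hfS'⟩, _⟩ := hf'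
  set S₂ := AddSubmonoid.closure (insert f (S : Set (Fin d → ℕ))) with hS₂
  have hSle2 : S ≤ S₂ := fun x hx =>
    AddSubmonoid.subset_closure (Set.mem_insert_of_mem _ hx)
  have hf2 : f ∈ S₂ := AddSubmonoid.subset_closure (Set.mem_insert _ _)
  have hlt2 : S < S₂ := lt_of_le_of_ne hSle2 (fun h => hfS (h ▸ hf2))
  apply hirr
  refine ⟨S', S₂, hlt, hlt2, ?_⟩
  apply Set.Subset.antisymm
  · intro x hx; exact ⟨hSS' hx, hSle2 hx⟩
  · rintro x ⟨hx1, hx2⟩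
    obtain ⟨k, s, hs, rfl⟩ := mem_closure_insert_frob S f x hx2
    cases k with
    | zero => simpa using hs
    | succ j =>
      by_cases hxS : (j + 1) • f + s ∈ S
      · exact hxS
      · exfalso
        have hgap : ((j + 1) • f + s) ∈ gaps S :=
          ⟨posCone_combo S (j + 1) hfpos hs, hxS⟩
        have h1 : r ((j + 1) • f + s) f := hmax _ hgap
        have hrw : (j + 1) • f + s = (j • f + s) + f := by
          rw [succ_nsmul]; abel
        have h2 : r f ((j + 1) • f + s) := by
          have := hr.2.2.2.2 0 (j • f + s) f (hr.2.2.2.1 _)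
          rw [zero_add] at this
          rw [hrw]
          exact this
        have heq : (j + 1) • f + s = f := hr.2.1 _ _ h1 h2
        exact hfS' (heq ▸ hx1)
end

section
/- Let S be a submonoid of ℕ^d with S ≠ {0}, and let m(S) denote the componentwise infimum in ℕ^d of the set S \ {0}. Then S is a PI-monoid if and only if m(S) ∈ S \ {0} and the set (S \ {0}) − m(S) := {s − m(S) : s ∈ S \ {0}} (differences taken componentwise in ℕ^d, which is possible since m(S) is then the componentwise minimum of S \ {0}) is a submonoid of ℕ^d. -/
open scoped BigOperators

/-- A nontrivial submonoid `S` of `ℕ^d` is a PI-monoid iff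
`m(S) ∈ S \ {0}` and `(S \ {0}) - m(S)` is a submonoid of `ℕ^d`. -/
theorem pi_monoid_iff {d : ℕ} (S : AddSubmonoid (Fin d → ℕ)) (hS : S ≠ ⊥) :
    IsPIMonoid S ↔
      (mult S ∈ S ∧ mult S ≠ 0 ∧
        ∃ T : AddSubmonoid (Fin d → ℕ),
          (T : Set (Fin d → ℕ)) = {x | ∃ s ∈ S, s ≠ 0 ∧ x + mult S = s}) := by
  constructor
  · rintro ⟨T, a, haT, ha0, hEq⟩
    have hmem : ∀ t ∈ T, a + t ∈ S ∧ a + t ≠ 0 := by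
      intro t ht
      refine ⟨?_, ?_⟩
      · have : a + t ∈ (S : Set (Fin d → ℕ)) := by
          rw [hEq]; exact Or.inl ⟨t, ht, rfl⟩
        exact this
      · intro h
        apply ha0
        funext i
        exact Nat.eq_zero_of_add_eq_zero_right (congrFun h i)
    have hmult : mult S = a := by
      funext i
      unfold mult
      apply le_antisymm
      · apply Nat.sInf_le
        refine ⟨a + 0, (hmem 0 T.zero_mem).1, (hmem 0 T.zero_mem).2, by simp⟩
      · apply le_csInf
        · exact ⟨(a + 0) i, a + 0, (hmem 0 T.zero_mem).1, (hmem 0 T.zero_mem).2, rfl⟩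
        · rintro n ⟨s, hs, hs0, rfl⟩
          have : s ∈ (S : Set (Fin d → ℕ)) := hs
          rw [hEq] at this
          rcases this with ⟨t, _, rfl⟩ | h0
          · exact Nat.le_add_right _ _
          · exact absurd h0 hs0
    rw [hmult]
    have haS : a ∈ S := by simpa using (hmem 0 T.zero_mem).1
    refine ⟨haS, ha0, T, ?_⟩
    ext x
    constructor
    · intro hx
      refine ⟨a + x, (hmem x hx).1, (hmem x hx).2, add_comm x a⟩
    · rintro ⟨s, hs, hs0, hxa⟩
      have : s ∈ (S : Set (Fin d → ℕ)) := hs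
      rw [hEq] at this
      rcases this with ⟨t, ht, rfl⟩ | h0
      · have : x = t := by
          have := hxa
          rw [add_comm] at this
          exact add_left_cancel this
        rwa [this]
      · exact absurd h0 hs0
  · rintro ⟨hm, hm0, T, hT⟩
    have hle : ∀ s ∈ S, s ≠ 0 → ∀ i, mult S i ≤ s i := by
      intro s hs hs0 i
      exact Nat.sInf_le ⟨s, hs, hs0, rfl⟩
    refine ⟨T, mult S, ?_, hm0, ?_⟩
    · show mult S ∈ (T : Set (Fin d → ℕ))
      rw [hT]
      refine ⟨mult S + mult S, S.add_mem hm hm, ?_, rfl⟩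
      intro h
      apply hm0
      funext i
      exact Nat.eq_zero_of_add_eq_zero_right (congrFun h i)
    · ext x
      constructor
      · intro hx
        by_cases hx0 : x = 0
        · exact Or.inr hx0
        · left
          refine ⟨fun i => x i - mult S i, ?_, ?_⟩
          · show _ ∈ (T : Set (Fin d → ℕ))
            rw [hT]
            refine ⟨x, hx, hx0, ?_⟩
            funext i
            exact Nat.sub_add_cancel (hle x hx hx0 i)
          · funext i
            have := hle x hx hx0 i
            simp only [Pi.add_apply]
            omega
      · rintro (⟨t, ht, rfl⟩ | rfl)
        · have : t ∈ (T : Set (Fin d → ℕ)) := ht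
          rw [hT] at this
          obtain ⟨s, hs, _, hts⟩ := this
          have : mult S + t = s := by rw [← hts]; funext i; simp [Pi.add_apply]; omega
          rw [this]; exact hs
        · exact S.zero_mem
end

section
/- Let S be a submonoid of ℕ^d that is a PI-monoid. Then there exist a unique submonoid T of ℕ^d and a unique element a ∈ T \ {0} such that S = (a + T) ∪ {0}; namely, a = m(S) and T = (S \ {0}) − m(S). -/
open scoped BigOperators

private lemma add_eq_zero_left {d : ℕ} {a t : Fin d → ℕ} (h : a + t = 0) : a = 0 := by
  funext i
  have := congrFun h i
  simp [Pi.add_apply] at this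
  exact this.1

/-- Membership characterization from a presentation. -/
private lemma mem_iff_pres {d : ℕ} {S T : AddSubmonoid (Fin d → ℕ)} {a : Fin d → ℕ}
    (ha0 : a ≠ 0)
    (hS : (S : Set (Fin d → ℕ)) = {x | ∃ t ∈ T, x = a + t} ∪ {0}) (x : Fin d → ℕ) :
    (x ∈ S ∧ x ≠ 0) ↔ ∃ t ∈ T, x = a + t := by
  constructor
  · rintro ⟨hx, hx0⟩
    have : x ∈ (S : Set (Fin d → ℕ)) := hx
    rw [hS] at this
    rcases this with h | h
    · exact h
    · exact absurd h hx0
  · rintro ⟨t, ht, rfl⟩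
    refine ⟨?_, fun h0 => ha0 (add_eq_zero_left h0)⟩
    have : a + t ∈ (S : Set (Fin d → ℕ)) := by
      rw [hS]; exact Or.inl ⟨t, ht, rfl⟩
    exact this

private lemma mult_eq {d : ℕ} {S T : AddSubmonoid (Fin d → ℕ)} {a : Fin d → ℕ}
    (haT : a ∈ T) (ha0 : a ≠ 0)
    (hS : (S : Set (Fin d → ℕ)) = {x | ∃ t ∈ T, x = a + t} ∪ {0}) :
    mult S = a := by
  funext i
  have haS : a ∈ S ∧ a ≠ 0 := (mem_iff_pres ha0 hS a).2 ⟨0, T.zero_mem, by simp⟩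
  have hmem : a i ∈ {n | ∃ s ∈ S, s ≠ 0 ∧ s i = n} := ⟨a, haS.1, haS.2, rfl⟩
  refine le_antisymm (Nat.sInf_le hmem) ?_
  refine le_csInf ⟨_, hmem⟩ ?_
  rintro n ⟨s, hs, hs0, rfl⟩
  obtain ⟨t, _, rfl⟩ := (mem_iff_pres ha0 hS s).1 ⟨hs, hs0⟩
  simp [Pi.add_apply]

private lemma mem_T_iff {d : ℕ} {S T : AddSubmonoid (Fin d → ℕ)} {a : Fin d → ℕ}
    (ha0 : a ≠ 0)
    (hS : (S : Set (Fin d → ℕ)) = {x | ∃ t ∈ T, x = a + t} ∪ {0}) (x : Fin d → ℕ) :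
    x ∈ T ↔ (a + x ∈ S ∧ a + x ≠ 0) := by
  rw [mem_iff_pres ha0 hS]
  constructor
  · intro hx; exact ⟨x, hx, rfl⟩
  · rintro ⟨t, ht, heq⟩
    have : x = t := by
      have := add_left_cancel heq
      exact this
    exact this ▸ ht

/-- A PI-monoid `S` has a unique presentation `S = (a + T) ∪ {0}`
with `T` a submonoid of `ℕ^d` and `a ∈ T \ {0}`; namely `a = m(S)` and
`T = (S \ {0}) - m(S)`. -/
theorem pi_monoid_unique_presentation {d : ℕ} (S : AddSubmonoid (Fin d → ℕ))
    (h : IsPIMonoid S) :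
    (∃ T : AddSubmonoid (Fin d → ℕ),
        (T : Set (Fin d → ℕ)) = {x | ∃ s ∈ S, s ≠ 0 ∧ x + mult S = s} ∧
        mult S ∈ T ∧ mult S ≠ 0 ∧
        (S : Set (Fin d → ℕ)) = {x | ∃ t ∈ T, x = mult S + t} ∪ {0}) ∧
      ∀ (T₁ T₂ : AddSubmonoid (Fin d → ℕ)) (a₁ a₂ : Fin d → ℕ),
        a₁ ∈ T₁ → a₁ ≠ 0 →
        (S : Set (Fin d → ℕ)) = {x | ∃ t ∈ T₁, x = a₁ + t} ∪ {0} →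
        a₂ ∈ T₂ → a₂ ≠ 0 →
        (S : Set (Fin d → ℕ)) = {x | ∃ t ∈ T₂, x = a₂ + t} ∪ {0} →
        T₁ = T₂ ∧ a₁ = a₂ := by
  obtain ⟨T, a, haT, ha0, hS⟩ := h
  have hma : mult S = a := mult_eq haT ha0 hS
  constructor
  · refine ⟨T, ?_, hma ▸ haT, hma ▸ ha0, hma ▸ hS⟩
    ext x
    simp only [SetLike.mem_coe, Set.mem_setOf_eq]
    rw [mem_T_iff ha0 hS x]
    constructor
    · rintro ⟨hx, hx0⟩
      exact ⟨a + x, hx, hx0, by rw [hma, add_comm]⟩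
    · rintro ⟨s, hs, hs0, heq⟩
      rw [hma, add_comm] at heq
      rw [heq]; exact ⟨hs, hs0⟩
  · intro T₁ T₂ a₁ a₂ h₁T h₁0 h₁ h₂T h₂0 h₂
    have e₁ : mult S = a₁ := mult_eq h₁T h₁0 h₁
    have e₂ : mult S = a₂ := mult_eq h₂T h₂0 h₂
    have ea : a₁ = a₂ := e₁ ▸ e₂
    refine ⟨?_, ea⟩
    ext x
    rw [mem_T_iff h₁0 h₁ x, mem_T_iff h₂0 h₂ x, ea]
end
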